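/- Let q ∈ (1,2] and let U : ℤ → [0,∞) be a bounded nonnegative potential. For every summable f : ℤ → ℝ with f ≥ 0 and every x ∈ ℤ, 0 ≤ |∇̃f|²(x) + U(x)·f(x)² ≤ (2/(q(q−1))) · Γ_{q,U}(f)(x), where Γ_{q,U}(f) = q·f·L_U f − f^{2−q}·L_U(f^q) and L_U = L + M_U with M_U multiplication by U. -/

import Mathlib

open MeasureTheory Real

/-- The kernel `K_s` of the fractional discrete Laplacian on `ℤ`. -/
noncomputable def Ker (s : ℝ) (m : ℤ) : ℝ :=
  if m = 0 then 0
  else ((4 : ℝ) ^ s * Real.Gamma (1 / 2 + s) / (Real.sqrt Real.pi * |Real.Gamma (-s)|)) *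
    (Real.Gamma ((m.natAbs : ℝ) - s) / Real.Gamma ((m.natAbs : ℝ) + 1 + s))

/-- The fractional discrete Laplacian `L = (-Δ)^s` acting pointwise. -/
noncomputable def Lop (s : ℝ) (f : ℤ → ℝ) : ℤ → ℝ :=
  fun x => ∑' y : ℤ, (f x - f y) * Ker s (x - y)

/-- The heat semigroup `P_t = exp (-t L)`, given by the exponential series of the
bounded operator `-tL` (evaluated pointwise). -/
noncomputable def heat (s t : ℝ) (f : ℤ → ℝ) : ℤ → ℝ :=
  fun x => ∑' n : ℕ, ((-t) ^ n / (n.factorial : ℝ)) * ((Lop s)^[n] f x)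

/-- The squared modulus of the gradient, `|∇f|²(x) = Σ_y K_s(y-x) (f x - f y)²`. -/
noncomputable def gradSq (s : ℝ) (f : ℤ → ℝ) (x : ℤ) : ℝ :=
  ∑' y : ℤ, Ker s (y - x) * (f x - f y) ^ 2

/-- The squared modulus of the modified gradient,
`|∇̃f|²(x) = Σ_{y : |f y| < |f x|} K_s(y-x) (f x - f y)²`. -/
noncomputable def mgradSq (s : ℝ) (f : ℤ → ℝ) (x : ℤ) : ℝ :=
  ∑' y : {y : ℤ // |f y| < |f x|}, Ker s ((y : ℤ) - x) * (f x - f (y : ℤ)) ^ 2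

/-- The `ℓ^q` norm on `ℤ` with counting measure (for finite `q`). -/
noncomputable def lqNorm (q : ℝ) (f : ℤ → ℝ) : ℝ :=
  (∑' x : ℤ, |f x| ^ q) ^ (1 / q)

/-- The Schrödinger operator `L_U = L + M_U`, where `M_U` is multiplication by `U`. -/
noncomputable def LopU (s : ℝ) (U : ℤ → ℝ) (f : ℤ → ℝ) : ℤ → ℝ :=
  fun x => Lop s f x + U x * f x

/-- The pseudo-gradient associated with `L_U`:
`Γ_{q,U}(f) = q f · L_U f - f^{2-q} · L_U (f^q)` (real powers). -/
noncomputable def GammaQU (s q : ℝ) (U : ℤ → ℝ) (f : ℤ → ℝ) : ℤ → ℝ :=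
  fun x => q * f x * LopU s U f x - f x ^ (2 - q) * LopU s U (fun y => f y ^ q) x


section Aux

/-! ### One-variable elementary inequalities -/

private lemma key0 {q t : ℝ} (hq1 : 1 ≤ q) (ht : 0 ≤ t) :
    0 ≤ q * (1 - t) - (1 - t ^ q) := by
  have h := one_add_mul_self_le_rpow_one_add (show (-1:ℝ) ≤ t - 1 by linarith) hq1
  rw [show (1:ℝ) + (t-1) = t by ring] at h
  nlinarith

private lemma keyderiv {q : ℝ} (hq1 : 1 < q) (t : ℝ) :
    HasDerivAt (fun t : ℝ => q * (1 - t) - (1 - t ^ q) - q * (q - 1) / 2 * (1 - t) ^ 2)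
      (-q + q * t ^ (q - 1) + q * (q - 1) * (1 - t)) t := by
  have h1 : HasDerivAt (fun t : ℝ => t ^ q) (q * t ^ (q - 1)) t :=
    Real.hasDerivAt_rpow_const (Or.inr hq1.le)
  have h2 : HasDerivAt (fun t : ℝ => q * (1 - t)) (-q) t := by
    simpa using (((hasDerivAt_id t).const_sub 1).const_mul q)
  have h3 : HasDerivAt (fun t : ℝ => (1 - t) ^ 2) (-(2 * (1 - t))) t := by
    simpa using (((hasDerivAt_id t).const_sub 1).fun_pow 2)
  have := (h2.sub ((hasDerivAt_const t (1:ℝ)).sub h1)).sub (h3.const_mul (q * (q - 1) / 2))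
  refine this.congr_deriv ?_
  ring

private lemma key1 {q t : ℝ} (hq1 : 1 < q) (hq2 : q ≤ 2) (ht0 : 0 ≤ t) (ht1 : t ≤ 1) :
    q * (q - 1) / 2 * (1 - t) ^ 2 ≤ q * (1 - t) - (1 - t ^ q) := by
  set φ : ℝ → ℝ := fun t : ℝ => q * (1 - t) - (1 - t ^ q) - q * (q - 1) / 2 * (1 - t) ^ 2 with hφ
  have hanti : AntitoneOn φ (Set.Icc 0 1) := by
    apply antitoneOn_of_deriv_nonpos (convex_Icc 0 1)
    · exact fun t _ => ((keyderiv hq1 t).continuousAt).continuousWithinAt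
    · exact fun t _ => ((keyderiv hq1 t).differentiableAt).differentiableWithinAt
    · intro t ht
      rw [interior_Icc] at ht
      rw [(keyderiv hq1 t).deriv]
      have hgm := Real.geom_mean_le_arith_mean2_weighted (by linarith : (0:ℝ) ≤ 2 - q)
        (by linarith : (0:ℝ) ≤ q - 1) zero_le_one ht.1.le (by ring)
      rw [Real.one_rpow, one_mul] at hgm
      nlinarith [ht.1.le, ht.2.le]
  have h10 : φ 1 = 0 := by simp [hφ, Real.one_rpow]
  have := hanti (Set.mem_Icc.2 ⟨ht0, ht1⟩) (Set.mem_Icc.2 ⟨zero_le_one, le_refl 1⟩) ht1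
  rw [h10] at this
  simp only [hφ] at this
  linarith

/-! ### Two-variable inequalities -/

private lemma Fid {q a b : ℝ} (ha : 0 < a) (hb : 0 ≤ b) :
    q * a * (a - b) - a ^ (2 - q) * (a ^ q - b ^ q)
      = a ^ (2:ℕ) * (q * (1 - b / a) - (1 - (b / a) ^ q)) := by
  have h1 : a ^ (2 - q) * a ^ q = a ^ (2:ℕ) := by
    rw [← Real.rpow_add ha]
    norm_num [Real.rpow_two]
  have h2 : (b / a) ^ q = b ^ q / a ^ q := Real.div_rpow hb ha.le q
  have hQ : a ^ q ≠ 0 := by positivity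
  rw [h2, ← h1]
  field_simp
  linear_combination (q*b - q*a) * h1

private lemma F_nonneg {q a b : ℝ} (hq1 : 1 < q) (ha : 0 ≤ a) (hb : 0 ≤ b) :
    0 ≤ q * a * (a - b) - a ^ (2 - q) * (a ^ q - b ^ q) := by
  rcases eq_or_lt_of_le ha with h | h
  · rw [← h, Real.zero_rpow (by positivity : q ≠ 0)]
    have : q * 0 * (0 - b) - (0:ℝ) ^ (2 - q) * (0 - b ^ q) = (0:ℝ) ^ (2-q) * b ^ q := by ring
    rw [this]
    exact mul_nonneg (Real.rpow_nonneg le_rfl _) (Real.rpow_nonneg hb _)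
  · rw [Fid h hb]
    exact mul_nonneg (by positivity) (key0 hq1.le (by positivity))

private lemma F_ge {q a b : ℝ} (hq1 : 1 < q) (hq2 : q ≤ 2) (hb : 0 ≤ b) (hba : b < a) :
    q * (q - 1) / 2 * (a - b) ^ 2 ≤ q * a * (a - b) - a ^ (2 - q) * (a ^ q - b ^ q) := by
  have ha : 0 < a := lt_of_le_of_lt hb hba
  rw [Fid ha hb]
  have ht1 : b / a ≤ 1 := by rw [div_le_one ha]; exact hba.le
  have hk := key1 hq1 hq2 (by positivity : (0:ℝ) ≤ b / a) ht1
  have h5 : (a - b) ^ 2 = a ^ (2:ℕ) * (1 - b/a)^2 := by field_simp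
  calc q * (q-1)/2 * (a-b)^2 = a ^ (2:ℕ) * (q*(q-1)/2 * (1 - b/a)^2) := by rw [h5]; ring
    _ ≤ a ^ (2:ℕ) * (q * (1 - b/a) - (1 - (b/a)^q)) :=
        mul_le_mul_of_nonneg_left hk (by positivity)

end Aux

section KerFacts

/-- the sequence `g n = Γ(n-s)/Γ(n+1+s)`. -/
private noncomputable def gker (s : ℝ) (n : ℕ) : ℝ :=
  Real.Gamma ((n : ℝ) - s) / Real.Gamma ((n : ℝ) + 1 + s)

/-- `c n = Γ(n-s)/Γ(n+s)`. -/
private noncomputable def cker (s : ℝ) (n : ℕ) : ℝ :=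
  Real.Gamma ((n : ℝ) - s) / Real.Gamma ((n : ℝ) + s)

private lemma gker_nonneg {s : ℝ} (hs0 : 0 < s) (hs1 : s < 1) {n : ℕ} (hn : 1 ≤ n) :
    0 ≤ gker s n := by
  have h1 : (0:ℝ) < (n:ℝ) - s := by
    have : (1:ℝ) ≤ (n:ℝ) := by exact_mod_cast hn
    linarith
  have h2 : (0:ℝ) < (n:ℝ) + 1 + s := by positivity
  exact le_of_lt (div_pos (Real.Gamma_pos_of_pos h1) (Real.Gamma_pos_of_pos h2))

private lemma cker_nonneg {s : ℝ} (hs0 : 0 < s) (hs1 : s < 1) {n : ℕ} (hn : 1 ≤ n) :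
    0 ≤ cker s n := by
  have h1 : (0:ℝ) < (n:ℝ) - s := by
    have : (1:ℝ) ≤ (n:ℝ) := by exact_mod_cast hn
    linarith
  have h2 : (0:ℝ) < (n:ℝ) + s := by positivity
  exact le_of_lt (div_pos (Real.Gamma_pos_of_pos h1) (Real.Gamma_pos_of_pos h2))

private lemma gker_eq {s : ℝ} (hs0 : 0 < s) (hs1 : s < 1) {n : ℕ} (hn : 1 ≤ n) :
    gker s n = (cker s n - cker s (n + 1)) / (2 * s) := by
  have hn1 : (1:ℝ) ≤ (n:ℝ) := by exact_mod_cast hn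
  have h1 : (0:ℝ) < (n:ℝ) - s := by linarith
  have h2 : (0:ℝ) < (n:ℝ) + s := by positivity
  have hG1 := Real.Gamma_pos_of_pos h1
  have hG2 := Real.Gamma_pos_of_pos h2
  have e1 : Real.Gamma (((n:ℕ)+1:ℕ) - s) = ((n:ℝ) - s) * Real.Gamma ((n:ℝ) - s) := by
    push_cast
    rw [show (n:ℝ) + 1 - s = ((n:ℝ) - s) + 1 by ring, Real.Gamma_add_one h1.ne']
  have e3 : Real.Gamma (((n:ℕ)+1:ℕ) + s) = ((n:ℝ) + s) * Real.Gamma ((n:ℝ) + s) := by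
    push_cast
    rw [show (n:ℝ) + 1 + s = ((n:ℝ) + s) + 1 by ring, Real.Gamma_add_one h2.ne']
  have e2 : Real.Gamma ((n:ℝ) + 1 + s) = ((n:ℝ) + s) * Real.Gamma ((n:ℝ) + s) := by
    rw [show (n:ℝ) + 1 + s = ((n:ℝ) + s) + 1 by ring, Real.Gamma_add_one h2.ne']
  unfold gker cker
  push_cast
  push_cast at e1 e3
  rw [e1, e3]
  field_simp
  ring

private lemma summable_gker {s : ℝ} (hs0 : 0 < s) (hs1 : s < 1) :
    Summable (fun n : ℕ => gker s (n + 1)) := by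
  apply summable_of_sum_range_le (c := cker s 1 / (2 * s))
  · intro n; exact gker_nonneg hs0 hs1 (Nat.le_add_left 1 n)
  · intro n
    have key : ∀ m : ℕ, ∑ i ∈ Finset.range m, gker s (i + 1)
        = (cker s 1 - cker s (m + 1)) / (2 * s) := by
      intro m
      induction m with
      | zero => simp
      | succ m ih =>
        rw [Finset.sum_range_succ, ih, gker_eq hs0 hs1 (Nat.le_add_left 1 m)]
        ring
    rw [key n]
    have := cker_nonneg hs0 hs1 (Nat.le_add_left 1 n)
    rw [sub_div]
    exact sub_le_self _ (div_nonneg this (by positivity))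

private lemma Ker_neg (s : ℝ) (m : ℤ) : Ker s (-m) = Ker s m := by
  simp [Ker, neg_eq_zero, Int.natAbs_neg]

private lemma Ker_nonneg {s : ℝ} (hs0 : 0 < s) (hs1 : s < 1) (m : ℤ) : 0 ≤ Ker s m := by
  unfold Ker
  split
  · exact le_refl 0
  · rename_i hm
    have hC : 0 ≤ (4 : ℝ) ^ s * Real.Gamma (1 / 2 + s) / (Real.sqrt Real.pi * |Real.Gamma (-s)|) := by
      apply div_nonneg _ (by positivity)
      exact mul_nonneg (le_of_lt (Real.rpow_pos_of_pos (by norm_num) s))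
        (Real.Gamma_pos_of_pos (by linarith)).le
    have hab : 1 ≤ m.natAbs := by omega
    exact mul_nonneg hC (gker_nonneg hs0 hs1 hab)

private lemma summable_Ker {s : ℝ} (hs0 : 0 < s) (hs1 : s < 1) : Summable (Ker s) := by
  set C := (4 : ℝ) ^ s * Real.Gamma (1 / 2 + s) / (Real.sqrt Real.pi * |Real.Gamma (-s)|) with hC
  have hpos : Summable (fun n : ℕ => C * gker s (n + 1)) := (summable_gker hs0 hs1).mul_left C
  have h1 : Summable (fun n : ℕ => Ker s ((n:ℤ) + 1)) := by
    apply hpos.congr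
    intro n
    have : ((n:ℤ) + 1) ≠ 0 := by positivity
    have hna : ((n:ℤ) + 1).natAbs = n + 1 := by omega
    simp only [Ker, if_neg this, hna, gker, hC]
  have h2 : Summable (fun n : ℕ => Ker s (n : ℤ)) := by
    have := (summable_nat_add_iff (f := fun n : ℕ => Ker s (n : ℤ)) 1).mp
    apply this
    apply h1.congr
    intro n
    congr 1
  have h3 : Summable (fun n : ℕ => Ker s (-((n:ℤ) + 1))) := by
    apply h1.congr
    intro n
    rw [Ker_neg]
  exact Summable.of_nat_of_neg_add_one h2 h3

end KerFacts

/-- Pointwise domination of the modified gradient plus potential term by the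
Schrödinger pseudo-gradient:
`0 ≤ |∇̃ f|²(x) + U(x) f(x)² ≤ (2/(q(q-1))) Γ_{q,U}(f)(x)`. -/
theorem mgradSq_add_potential_le_gammaQU (s : ℝ) (hs : s ∈ Set.Ioo (0 : ℝ) 1) (q : ℝ)
    (hq : q ∈ Set.Ioc (1 : ℝ) 2) (U : ℤ → ℝ) (hU0 : ∀ x, 0 ≤ U x)
    (hUbd : ∃ M : ℝ, ∀ x, U x ≤ M) (f : ℤ → ℝ) (hf : Summable f) (hf0 : ∀ x, 0 ≤ f x)
    (x : ℤ) :
    0 ≤ mgradSq s f x + U x * f x ^ 2 ∧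
      mgradSq s f x + U x * f x ^ 2 ≤ 2 / (q * (q - 1)) * GammaQU s q U f x := by
  obtain ⟨hs0, hs1⟩ := hs
  obtain ⟨hq1, hq2⟩ := hq
  have hq0 : (0:ℝ) < q := by linarith
  have hKnn := Ker_nonneg hs0 hs1
  have hKsum := summable_Ker hs0 hs1
  set B := ∑' m : ℤ, Ker s m with hB
  have hKle : ∀ m : ℤ, Ker s m ≤ B := fun m => Summable.le_tsum hKsum m (fun j _ => hKnn j)
  have hKx : Summable (fun y : ℤ => Ker s (x - y)) :=
    ((Equiv.subLeft x).summable_iff (f := Ker s)).2 hKsum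
  set T := ∑' y : ℤ, f y with hT
  have hfle : ∀ y, f y ≤ T := fun y => Summable.le_tsum hf y (fun j _ => hf0 j)
  have hT0 : 0 ≤ T := tsum_nonneg (fun y => hf0 y)
  have hfqnn : ∀ y, 0 ≤ f y ^ q := fun y => Real.rpow_nonneg (hf0 y) q
  have hfq : Summable (fun y => f y ^ q) := by
    apply Summable.of_nonneg_of_le hfqnn ?_ (hf.mul_left (T ^ (q - 1)))
    intro y
    rcases eq_or_lt_of_le (hf0 y) with h | h
    · rw [← h, Real.zero_rpow hq0.ne']
      positivity
    · have hy : f y ^ q = f y ^ (q - 1) * f y := by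
        conv_lhs => rw [show q = (q - 1) + 1 by ring]
        rw [Real.rpow_add h, Real.rpow_one]
      rw [hy]
      exact mul_le_mul_of_nonneg_right
        (Real.rpow_le_rpow (hf0 y) (hfle y) (by linarith)) (hf0 y)
  have hmulK : ∀ g : ℤ → ℝ, (∀ y, 0 ≤ g y) → Summable g →
      Summable (fun y => g y * Ker s (x - y)) := by
    intro g hg0 hg
    apply Summable.of_nonneg_of_le (fun y => mul_nonneg (hg0 y) (hKnn _)) ?_ (hg.mul_right B)
    intro y
    exact mul_le_mul_of_nonneg_left (hKle _) (hg0 y)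
  have hfK := hmulK f hf0 hf
  have hfqK := hmulK _ hfqnn hfq
  have hsum1 : Summable (fun y => (f x - f y) * Ker s (x - y)) := by
    apply ((hKx.mul_left (f x)).sub hfK).congr
    intro y; ring
  have hsum2 : Summable (fun y => (f x ^ q - f y ^ q) * Ker s (x - y)) := by
    apply ((hKx.mul_left (f x ^ q)).sub hfqK).congr
    intro y; ring
  set FF : ℤ → ℝ := fun y => Ker s (x - y) *
    (q * f x * (f x - f y) - f x ^ (2 - q) * (f x ^ q - f y ^ q)) with hFF
  have hFFsum : Summable FF := by
    apply ((hsum1.mul_left (q * f x)).sub (hsum2.mul_left (f x ^ (2 - q)))).congr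
    intro y; simp only [hFF]; ring
  have hFFnn : ∀ y, 0 ≤ FF y := fun y => mul_nonneg (hKnn _) (F_nonneg hq1 (hf0 x) (hf0 y))
  have hTid : q * f x * Lop s f x - f x ^ (2 - q) * Lop s (fun y => f y ^ q) x
      = ∑' y : ℤ, FF y := by
    simp only [Lop]
    rw [← tsum_mul_left, ← tsum_mul_left, ← Summable.tsum_sub (hsum1.mul_left _) (hsum2.mul_left _)]
    exact tsum_congr fun y => by simp only [hFF]; ring
  have hGam : GammaQU s q U f x
      = (∑' y : ℤ, FF y) + U x * (q * f x ^ 2 - f x ^ (2 - q) * f x ^ q) := by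
    simp only [GammaQU, LopU]
    rw [← hTid]; ring
  set c2 := 2 / (q * (q - 1)) with hc2
  have hqq : q * (q - 1) ≠ 0 := by nlinarith
  have hc20 : 0 < c2 := by
    apply div_pos two_pos; nlinarith
  have hptS : ∀ y : {y : ℤ // |f y| < |f x|},
      Ker s ((y:ℤ) - x) * (f x - f (y:ℤ)) ^ 2 ≤ c2 * FF (y:ℤ) := by
    rintro ⟨y, hy⟩
    simp only
    rw [abs_of_nonneg (hf0 y), abs_of_nonneg (hf0 x)] at hy
    have hker : Ker s (y - x) = Ker s (x - y) := by rw [← Ker_neg s (x - y), neg_sub]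
    rw [hker]
    have hF := F_ge hq1 hq2 (hf0 y) hy
    calc Ker s (x - y) * (f x - f y) ^ 2
        ≤ Ker s (x - y) * (c2 * (q * f x * (f x - f y) - f x ^ (2-q) * (f x ^ q - f y ^ q))) := by
          apply mul_le_mul_of_nonneg_left _ (hKnn _)
          calc (f x - f y) ^ 2 = c2 * (q * (q - 1) / 2 * (f x - f y) ^ 2) := by
                rw [hc2]; field_simp
            _ ≤ c2 * (q * f x * (f x - f y) - f x ^ (2-q) * (f x ^ q - f y ^ q)) :=
                mul_le_mul_of_nonneg_left hF hc20.le
      _ = c2 * FF y := by simp only [hFF]; ring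
  have hsubsum : Summable (fun y : {y : ℤ // |f y| < |f x|} => c2 * FF (y:ℤ)) :=
    (hFFsum.mul_left c2).subtype _
  have hsmall : Summable (fun y : {y : ℤ // |f y| < |f x|} =>
      Ker s ((y:ℤ) - x) * (f x - f (y:ℤ)) ^ 2) :=
    Summable.of_nonneg_of_le (fun y => mul_nonneg (hKnn _) (sq_nonneg _)) hptS hsubsum
  have hmg0 : 0 ≤ mgradSq s f x :=
    tsum_nonneg (fun y => mul_nonneg (hKnn _) (sq_nonneg _))
  have hmg1 : mgradSq s f x ≤ ∑' y : {y : ℤ // |f y| < |f x|}, c2 * FF (y:ℤ) :=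
    Summable.tsum_le_tsum hptS hsmall hsubsum
  have hmg2 : (∑' y : {y : ℤ // |f y| < |f x|}, c2 * FF (y:ℤ))
      = c2 * ∑' y : {y : ℤ // |f y| < |f x|}, FF (y:ℤ) := tsum_mul_left
  have hmg3 : (∑' y : {y : ℤ // |f y| < |f x|}, FF (y:ℤ)) ≤ ∑' y : ℤ, FF y :=
    Summable.tsum_subtype_le FF {y : ℤ | |f y| < |f x|} hFFnn hFFsum
  have hmg : mgradSq s f x ≤ c2 * ∑' y : ℤ, FF y := by
    refine hmg1.trans ?_
    rw [hmg2]
    exact mul_le_mul_of_nonneg_left hmg3 hc20.le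
  have hUpt : f x ^ 2 ≤ c2 * (q * f x ^ 2 - f x ^ (2 - q) * f x ^ q) := by
    rcases eq_or_lt_of_le (hf0 x) with h | h
    · rw [← h, Real.zero_rpow hq0.ne']
      norm_num
    · have hxx : f x ^ (2 - q) * f x ^ q = f x ^ 2 := by
        rw [← Real.rpow_add h]
        norm_num [Real.rpow_two]
      rw [hxx]
      have he : c2 * (q * f x ^ 2 - f x ^ 2) = 2 / q * f x ^ 2 := by
        rw [hc2]; field_simp
      rw [he]
      have h2q : 1 ≤ 2 / q := by rw [le_div_iff₀ hq0]; linarith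
      nlinarith [sq_nonneg (f x)]
  have hU : U x * f x ^ 2 ≤ c2 * (U x * (q * f x ^ 2 - f x ^ (2 - q) * f x ^ q)) := by
    have := mul_le_mul_of_nonneg_left hUpt (hU0 x)
    calc U x * f x ^ 2 ≤ U x * (c2 * (q * f x ^ 2 - f x ^ (2 - q) * f x ^ q)) := this
      _ = c2 * (U x * (q * f x ^ 2 - f x ^ (2 - q) * f x ^ q)) := by ring
  constructor
  · exact add_nonneg hmg0 (mul_nonneg (hU0 x) (sq_nonneg _))
  · calc mgradSq s f x + U x * f x ^ 2
        ≤ c2 * (∑' y : ℤ, FF y) + c2 * (U x * (q * f x ^ 2 - f x ^ (2 - q) * f x ^ q)) :=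
          add_le_add hmg hU
      _ = c2 * GammaQU s q U f x := by rw [hGam]; ring
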